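/- Every antimatroid admits a representation by stable matchings: for every antimatroid (S, 𝓕) on a finite set S there exists a stable matching instance (G = (U,V;E), ≻) with V = S such that the codomain of the induced map F : 2^U → 2^V coincides with 𝓕, i.e., { F(U') : U' ⊆ U } = 𝓕. -/

import Mathlib

open scoped Classical

/-- `M` is a matching with edges inside the edge set `E`:
no two distinct edges of `M` share a left or a right endpoint. -/
def IsMatching {U V : Type*} (E M : Finset (U × V)) : Prop :=
  M ⊆ E ∧ ∀ e₁ ∈ M, ∀ e₂ ∈ M, (e₁.1 = e₂.1 ∨ e₁.2 = e₂.2) → e₁ = e₂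

/-- The edge set of the subgraph `G[U' ∪ V]` induced by deleting
the left vertices outside `U'` (and their incident edges). -/
noncomputable def restrictL {U V : Type*} (E : Finset (U × V)) (U' : Finset U) : Finset (U × V) :=
  E.filter (fun e => e.1 ∈ U')

/-- `(u, v)` is a blocking pair against the matching `M`, with respect to the
edge set `E` and the preference profiles `succU` (for left vertices) and
`succV` (for right vertices):  `(u,v)` is an edge, `u` is unmatched or
prefers `v` to its partner, and `v` is unmatched or prefers `u` to its partner. -/
def IsBlocking {U V : Type*} (E : Finset (U × V)) (succU : U → V → V → Prop)
    (succV : V → U → U → Prop) (M : Finset (U × V)) (u : U) (v : V) : Prop :=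
  (u, v) ∈ E ∧
  ((∀ v', (u, v') ∉ M) ∨ (∃ v', (u, v') ∈ M ∧ succU u v v')) ∧
  ((∀ u', (u', v) ∉ M) ∨ (∃ u', (u', v) ∈ M ∧ succV v u u'))

/-- `M` is a stable matching of the instance with edge set `E` and
preferences `succU`, `succV`. -/
def IsStable {U V : Type*} (E : Finset (U × V)) (succU : U → V → V → Prop)
    (succV : V → U → U → Prop) (M : Finset (U × V)) : Prop :=
  IsMatching E M ∧ ∀ u v, ¬ IsBlocking E succU succV M u v

/-- The preferences form a stable matching instance on the bipartite graph with
edge set `E`: each `succU u` is a strict linear order on the neighbors of `u`,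
and each `succV v` is a strict linear order on the neighbors of `v`. -/
def ValidPrefs {U V : Type*} (E : Finset (U × V)) (succU : U → V → V → Prop)
    (succV : V → U → U → Prop) : Prop :=
  (∀ u v, ¬ succU u v v) ∧
  (∀ u v₁ v₂ v₃, succU u v₁ v₂ → succU u v₂ v₃ → succU u v₁ v₃) ∧
  (∀ u v₁ v₂, (u, v₁) ∈ E → (u, v₂) ∈ E → v₁ ≠ v₂ → succU u v₁ v₂ ∨ succU u v₂ v₁) ∧
  (∀ v u, ¬ succV v u u) ∧
  (∀ v u₁ u₂ u₃, succV v u₁ u₂ → succV v u₂ u₃ → succV v u₁ u₃) ∧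
  (∀ v u₁ u₂, (u₁, v) ∈ E → (u₂, v) ∈ E → u₁ ≠ u₂ → succV v u₁ u₂ ∨ succV v u₂ u₁)

/-- The codomain `{ F(U') : U' ⊆ U }` of the map `F` induced by the stable
matching instance: the family of all sets of right vertices matched by a stable
matching of a restricted instance `(G, ≻)_{U' ∪ V}`.  (By the rural hospitals
theorem all stable matchings of a given restriction match the same set of
right vertices, so this is exactly the codomain of `F`.) -/
def stableFamily {U V : Type*} (E : Finset (U × V)) (succU : U → V → V → Prop)
    (succV : V → U → U → Prop) : Set (Finset V) :=
  {X | ∃ (U' : Finset U) (M : Finset (U × V)),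
    IsStable (restrictL E U') succU succV M ∧ X = M.image Prod.snd}


lemma indexOf_lt_of_mem_take {α : Type*} [DecidableEq α] {x : α} : ∀ {l : List α} {n : ℕ},
    x ∈ l.take n → List.idxOf x l < n := by
  intro l
  induction l with
  | nil => intro n h; simp at h
  | cons a l ih =>
    intro n h
    cases n with
    | zero => simp at h
    | succ n =>
      rw [List.take_succ_cons] at h
      rcases List.mem_cons.1 h with h | h
      · subst h; simp
      · by_cases hxa : a = x
        · subst hxa; simp
        · rw [List.idxOf_cons_ne _ hxa]
          exact Nat.succ_lt_succ (ih h)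

lemma getElem_mem_take {α : Type*} (l : List α) (i n : ℕ) (h1 : i < n) (h2 : i < l.length) :
    l[i] ∈ l.take n := by
  have h : (l.take n)[i]'(by simp [h1, h2]) = l[i] := List.getElem_take
  exact h ▸ List.getElem_mem _

lemma family_biUnion {S : Type*} {𝓕 : Set (Finset S)} (hempty : (∅ : Finset S) ∈ 𝓕)
    (hunion : ∀ X ∈ 𝓕, ∀ Y ∈ 𝓕, X ∪ Y ∈ 𝓕) {ι : Type*}
    (A : Finset ι) (f : ι → Finset S) (hf : ∀ i ∈ A, f i ∈ 𝓕) :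
    A.biUnion f ∈ 𝓕 := by
  induction A using Finset.induction_on with
  | empty => simpa using hempty
  | @insert a A ha ih =>
    rw [Finset.biUnion_insert]
    exact hunion _ (hf a (Finset.mem_insert_self _ _)) _
      (ih fun i hi => hf i (Finset.mem_insert_of_mem hi))

lemma exists_feasible_word {S : Type*} {𝓕 : Set (Finset S)}
    (hacc : ∀ X ∈ 𝓕, X ≠ ∅ → ∃ v ∈ X, X.erase v ∈ 𝓕) :
    ∀ (Y : Finset S), Y ∈ 𝓕 → ∃ w : List S, w.Nodup ∧ w.toFinset = Y ∧
      ∀ m, 0 < m → m ≤ w.length → (w.take m).toFinset ∈ 𝓕 := by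
  intro Y
  induction Y using Finset.strongInduction with
  | _ Y ih =>
    intro hY
    by_cases hY0 : Y = ∅
    · exact ⟨[], by simp, by simp [hY0], fun m hm hml => by simp at hml; omega⟩
    · obtain ⟨v, hv, he⟩ := hacc Y hY hY0
      obtain ⟨w, hnd, htf, hpre⟩ := ih (Y.erase v) (Finset.erase_ssubset hv) he
      have hvw : v ∉ w := by
        intro hmem
        have : v ∈ Y.erase v := htf ▸ List.mem_toFinset.2 hmem
        simp at this
      refine ⟨w ++ [v], ?_, ?_, ?_⟩
      · rw [List.nodup_append]
        exact ⟨hnd, List.nodup_singleton v, by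
          intro a ha b hb
          rw [List.mem_singleton] at hb
          exact fun hab => hvw (hb ▸ hab ▸ ha)⟩
      · rw [List.toFinset_append]
        simp only [List.toFinset_cons, List.toFinset_nil, LawfulSingleton.insert_empty_eq]
        rw [htf, Finset.union_comm, ← Finset.insert_eq, Finset.insert_erase hv]
      · intro m hm hml
        simp only [List.length_append, List.length_singleton] at hml
        by_cases hc : m ≤ w.length
        · rw [List.take_append_of_le_length hc]
          exact hpre m hm hc
        · have hmm : m = w.length + 1 := by omega
          rw [hmm, List.take_of_length_le (by simp)]
          rw [List.toFinset_append]
          simp only [List.toFinset_cons, List.toFinset_nil, LawfulSingleton.insert_empty_eq]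
          rw [htf, Finset.union_comm, ← Finset.insert_eq, Finset.insert_erase hv]
          exact hY

/-- Every antimatroid `(S, 𝓕)` admits a representation by stable matchings:
there is a stable matching instance with right vertex set `S` whose induced
map `F` has codomain exactly `𝓕`. -/
theorem antimatroid_stable_representation {S : Type*} [Fintype S]
    (𝓕 : Set (Finset S))
    (hempty : ∅ ∈ 𝓕)
    (hacc : ∀ X ∈ 𝓕, X ≠ ∅ → ∃ v ∈ X, X.erase v ∈ 𝓕)
    (hunion : ∀ X ∈ 𝓕, ∀ Y ∈ 𝓕, X ∪ Y ∈ 𝓕) :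
    ∃ (U : Type) (_ : Fintype U) (E : Finset (U × S))
      (succU : U → S → S → Prop) (succV : S → U → U → Prop),
      ValidPrefs E succU succV ∧
      stableFamily E succU succV = 𝓕 := by

  obtain ⟨n, ⟨φ⟩⟩ : ∃ n : ℕ, Nonempty (Fin n ≃ {l : List S // l.Nodup}) :=
    ⟨Fintype.card {l : List S // l.Nodup}, ⟨(Fintype.equivFin _).symm⟩⟩
  set word : Fin n → List S := fun u => (φ u).val with hword
  have hnd : ∀ u, (word u).Nodup := fun u => (φ u).2
  set Good : Fin n → Prop :=
    fun u => ∀ m, 0 < m → m ≤ (word u).length → ((word u).take m).toFinset ∈ 𝓕 with hGood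
  set E : Finset (Fin n × S) :=
    Finset.univ.filter (fun p => Good p.1 ∧ p.2 ∈ word p.1) with hE
  set succU : Fin n → S → S → Prop := fun u v₁ v₂ =>
    v₁ ∈ word u ∧ v₂ ∈ word u ∧ (word u).idxOf v₁ < (word u).idxOf v₂ with hsuccU
  set succV : S → Fin n → Fin n → Prop := fun _ u₁ u₂ =>
    (word u₁).length < (word u₂).length ∨
      ((word u₁).length = (word u₂).length ∧ u₁ < u₂) with hsuccV
  have hEmem : ∀ p : Fin n × S, p ∈ E ↔ Good p.1 ∧ p.2 ∈ word p.1 := by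
    intro p; rw [hE]; simp
  have hRmem : ∀ (U' : Finset (Fin n)) (p : Fin n × S),
      p ∈ restrictL E U' ↔ (Good p.1 ∧ p.2 ∈ word p.1) ∧ p.1 ∈ U' := by
    intro U' p
    simp only [restrictL, Finset.mem_filter]
    rw [hEmem]
  refine ⟨Fin n, inferInstance, E, succU, succV, ⟨?_, ?_, ?_, ?_, ?_, ?_⟩, ?_⟩
  · simp only [hsuccU]
    rintro u v ⟨-, -, h⟩
    exact lt_irrefl _ h
  · simp only [hsuccU]
    rintro u a b c ⟨ha, hb, h1⟩ ⟨-, hc, h2⟩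
    exact ⟨ha, hc, h1.trans h2⟩
  · simp only [hsuccU]
    intro u v₁ v₂ h1 h2 hne
    rw [hEmem] at h1 h2
    have hne' : (word u).idxOf v₁ ≠ (word u).idxOf v₂ :=
      fun h => hne ((List.idxOf_inj h1.2).1 h)
    rcases lt_or_gt_of_ne hne' with h | h
    · exact Or.inl ⟨h1.2, h2.2, h⟩
    · exact Or.inr ⟨h2.2, h1.2, h⟩
  · simp only [hsuccV]
    rintro v u (h | ⟨-, h⟩) <;> exact lt_irrefl _ h
  · simp only [hsuccV]
    rintro v a b c (h1 | ⟨h1, h1'⟩) (h2 | ⟨h2, h2'⟩)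
    · exact Or.inl (h1.trans h2)
    · exact Or.inl (h2 ▸ h1)
    · exact Or.inl (h1 ▸ h2)
    · exact Or.inr ⟨h1.trans h2, h1'.trans h2'⟩
  · simp only [hsuccV]
    intro v u₁ u₂ _ _ hne
    rcases lt_trichotomy (word u₁).length (word u₂).length with h | h | h
    · exact Or.inl (Or.inl h)
    · rcases hne.lt_or_gt with h' | h'
      · exact Or.inl (Or.inr ⟨h, h'⟩)
      · exact Or.inr (Or.inr ⟨h.symm, h'⟩)
    · exact Or.inr (Or.inl h)
  apply Set.Subset.antisymm
  · -- every stable matched set is feasible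
    rintro X ⟨U', M, ⟨⟨hME, hMm⟩, hstab⟩, rfl⟩
    have hM : ∀ e ∈ M, (Good e.1 ∧ e.2 ∈ word e.1) ∧ e.1 ∈ U' :=
      fun e he => (hRmem U' e).1 (hME he)
    set P : Fin n × S → Finset S :=
      fun e => ((word e.1).take ((word e.1).idxOf e.2 + 1)).toFinset with hP
    have hPF : ∀ e ∈ M, P e ∈ 𝓕 := by
      intro e he
      exact (hM e he).1.1 _ (Nat.succ_pos _)
        (Nat.succ_le_of_lt (List.idxOf_lt_length_iff.2 (hM e he).1.2))
    have hmatched : ∀ e ∈ M, ∀ x ∈ P e, ∃ e' ∈ M, e'.2 = x := by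
      intro e he x hx
      by_contra hcon
      push_neg at hcon
      rw [hP] at hx
      have hxtake : x ∈ (word e.1).take ((word e.1).idxOf e.2 + 1) := List.mem_toFinset.1 hx
      have hxw : x ∈ word e.1 := List.mem_of_mem_take hxtake
      have hxne : x ≠ e.2 := fun h => hcon e he h.symm
      have hidx : (word e.1).idxOf x < (word e.1).idxOf e.2 := by
        have h1 := indexOf_lt_of_mem_take hxtake
        have h2 : (word e.1).idxOf x ≠ (word e.1).idxOf e.2 :=
          fun h => hxne ((List.idxOf_inj hxw).1 h)
        omega
      refine hstab e.1 x ⟨?_, ?_, ?_⟩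
      · exact (hRmem U' (e.1, x)).2 ⟨⟨(hM e he).1.1, hxw⟩, (hM e he).2⟩
      · refine Or.inr ⟨e.2, by simpa using he, ?_⟩
        simp only [hsuccU]
        exact ⟨hxw, (hM e he).1.2, hidx⟩
      · exact Or.inl fun u' hm => hcon (u', x) hm rfl
    have himg : M.image Prod.snd = M.biUnion P := by
      apply Finset.Subset.antisymm
      · intro x hx
        obtain ⟨e, he, rfl⟩ := Finset.mem_image.1 hx
        refine Finset.mem_biUnion.2 ⟨e, he, ?_⟩
        rw [hP]
        apply List.mem_toFinset.2
        have hlt := List.idxOf_lt_length_iff.2 (hM e he).1.2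
        have hmt := getElem_mem_take (word e.1) ((word e.1).idxOf e.2)
          ((word e.1).idxOf e.2 + 1) (Nat.lt_succ_self _) hlt
        rwa [List.getElem_idxOf hlt] at hmt
      · intro x hx
        obtain ⟨e, he, hxe⟩ := Finset.mem_biUnion.1 hx
        obtain ⟨e', he', rfl⟩ := hmatched e he x hxe
        exact Finset.mem_image_of_mem _ he'
    rw [himg]
    exact family_biUnion hempty hunion M P hPF
  · -- every feasible set is realized
    intro Y hY
    obtain ⟨w, hwnd, hwtf, hwpre⟩ := exists_feasible_word hacc Y hY
    set pu : Fin w.length → Fin n :=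
      fun i => φ.symm ⟨w.take ((i : ℕ) + 1), (List.take_sublist _ _).nodup hwnd⟩ with hpu
    have hwordpu : ∀ i : Fin w.length, word (pu i) = w.take ((i : ℕ) + 1) := by
      intro i; rw [hword, hpu]; simp
    have hlenpu : ∀ i : Fin w.length, (word (pu i)).length = (i : ℕ) + 1 := by
      intro i
      rw [hwordpu i, List.length_take]
      have := i.isLt
      omega
    have hgood : ∀ i, Good (pu i) := by
      intro i
      rw [hGood]
      intro m hm hml
      rw [hwordpu i] at hml ⊢
      rw [List.take_take]
      have hi := i.isLt
      rw [List.length_take] at hml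
      refine hwpre _ (by omega) (by omega)
    have hgetpu : ∀ i : Fin w.length, w.get i ∈ word (pu i) := by
      intro i
      rw [hwordpu i, List.get_eq_getElem]
      exact getElem_mem_take w i ((i : ℕ) + 1) (Nat.lt_succ_self _) i.isLt
    set U' : Finset (Fin n) := Finset.image pu Finset.univ with hU'
    set M : Finset (Fin n × S) := Finset.image (fun i => (pu i, w.get i)) Finset.univ with hM
    have hpuinj : ∀ i j : Fin w.length, pu i = pu j → i = j := by
      intro i j h
      have hl : (word (pu i)).length = (word (pu j)).length := by rw [h]
      rw [hlenpu i, hlenpu j] at hl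
      exact Fin.ext (by omega)
    have hgetinj : ∀ i j : Fin w.length, w.get i = w.get j → i = j :=
      fun i j h => (List.Nodup.get_inj_iff hwnd).1 h
    have hMmem : ∀ p, p ∈ M ↔ ∃ i, (pu i, w.get i) = p := by
      intro p
      rw [hM, Finset.mem_image]
      simp
    refine ⟨U', M, ⟨⟨?_, ?_⟩, ?_⟩, ?_⟩
    · intro p hp
      obtain ⟨i, rfl⟩ := (hMmem p).1 hp
      exact (hRmem U' _).2 ⟨⟨hgood i, hgetpu i⟩,
        by rw [hU']; exact Finset.mem_image_of_mem _ (Finset.mem_univ i)⟩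
    · intro e₁ h1 e₂ h2 hor
      obtain ⟨i, rfl⟩ := (hMmem e₁).1 h1
      obtain ⟨j, rfl⟩ := (hMmem e₂).1 h2
      rcases hor with h | h
      · rw [hpuinj i j h]
      · rw [hgetinj i j h]
    · rintro u x ⟨hedge, h2, h3⟩
      rw [hRmem] at hedge
      obtain ⟨⟨hgoodu, hxw⟩, hu⟩ := hedge
      rw [hU'] at hu
      obtain ⟨i, -, rfl⟩ := Finset.mem_image.1 hu
      rw [hwordpu i] at hxw
      have hmatchi : (pu i, w.get i) ∈ M := (hMmem _).2 ⟨i, rfl⟩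
      -- from the second blocking condition, x is strictly earlier than w.get i
      have hsucc : succU (pu i) x (w.get i) := by
        rcases h2 with h2 | ⟨v', hv', hs⟩
        · exact absurd hmatchi (h2 _)
        · obtain ⟨j, hj⟩ := (hMmem _).1 hv'
          have hji : j = i := hpuinj j i (congrArg Prod.fst hj)
          subst hji
          have hv'e : w.get j = v' := congrArg Prod.snd hj
          rwa [← hv'e] at hs
      simp only [hsuccU] at hsucc
      obtain ⟨hxm, -, hidx⟩ := hsucc
      rw [hwordpu i] at hxm hidx
      set t := w.take ((i : ℕ) + 1) with ht
      have htnd : t.Nodup := (List.take_sublist _ _).nodup hwnd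
      have htlen : t.length = (i : ℕ) + 1 := by
        rw [ht, List.length_take]
        have := i.isLt
        omega
      have hgeti : t.idxOf (w.get i) = (i : ℕ) := by
        have hilt : (i : ℕ) < t.length := by omega
        have h1 : t[(i : ℕ)]'hilt = w.get i := List.getElem_take
        rw [← h1]
        exact List.Nodup.idxOf_getElem htnd _ _
      rw [hgeti] at hidx
      -- identify x as the entry of w at index t.idxOf x < i
      have hjlt : t.idxOf x < t.length := List.idxOf_lt_length_iff.2 hxm
      have hjw : t.idxOf x < w.length := lt_of_lt_of_le (by omega) i.isLt.le
      set jf : Fin w.length := ⟨t.idxOf x, hjw⟩ with hjf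
      have hxeq : w.get jf = x := by
        have h1 : t[t.idxOf x]'hjlt = x := List.getElem_idxOf hjlt
        rw [← h1]
        exact List.getElem_take.symm
      have hmatchj : (pu jf, x) ∈ M := (hMmem _).2 ⟨jf, by rw [hxeq]⟩
      rcases h3 with h3 | ⟨u', hu', hs3⟩
      · exact h3 _ hmatchj
      · obtain ⟨j', hj'⟩ := (hMmem _).1 hu'
        have hj'x : w.get j' = x := congrArg Prod.snd hj'
        have hj'jf : j' = jf := hgetinj _ _ (by rw [hj'x, hxeq])
        have hfst : pu j' = u' := congrArg Prod.fst hj'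
        have hu'eq : u' = pu jf := by rw [← hfst, hj'jf]
        rw [hu'eq] at hs3
        simp only [hsuccV] at hs3
        rw [hlenpu i, hlenpu jf] at hs3
        have : (jf : ℕ) = t.idxOf x := rfl
        rcases hs3 with hs3 | ⟨hs3, -⟩ <;> omega
    · -- Y is the matched set
      have himg : M.image Prod.snd = w.toFinset := by
        rw [hM, Finset.image_image]
        ext x
        simp only [Finset.mem_image, Finset.mem_univ, true_and, Function.comp_apply,
          List.mem_toFinset]
        exact (List.mem_iff_get).symm
      rw [himg, hwtf]
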